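/- If L is a finite-dimensional g-module and M is a Whittaker g-module, then the tensor product L ⊗ M (with the diagonal g-action ξ·(l⊗v) = (ξ·l)⊗v + l⊗(ξ·v)) is again a Whittaker g-module. -/

import Mathlib

open scoped TensorProduct

namespace WhittakerAux17

variable {K : Type*} [Field K] {g : Type*} [LieRing g] [LieAlgebra K g]

section Extend

variable {M : Type*} [AddCommGroup M] [Module K M] [LieRingModule g M] [LieModule K g M]

/-- Extending a killing product to longer products. -/
lemma kill_extend (χ : g → K) (m : Submodule K g) (v : M) (n : ℕ)
    (hv : ∀ ξ : Fin n → g, (∀ i, ξ i ∈ m) →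
      ((List.ofFn fun i => (LieModule.toEnd K g M (ξ i) - χ (ξ i) • 1)).prod) v = 0) :
    ∀ n', n ≤ n' → ∀ ξ : Fin n' → g, (∀ i, ξ i ∈ m) →
      ((List.ofFn fun i => (LieModule.toEnd K g M (ξ i) - χ (ξ i) • 1)).prod) v = 0 := by
  intro n' hn
  induction n', hn using Nat.le_induction with
  | base => exact hv
  | succ n' hn ih =>
    intro ξ hξ
    rw [List.ofFn_succ, List.prod_cons, Module.End.mul_apply,
      ih (fun i => ξ i.succ) (fun i => hξ i.succ), map_zero]

/-- Mixed products (with identities interspersed) kill `v` provided enough genuine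
factors occur. -/
lemma mixed_kill (χ : g → K) (m : Submodule K g) :
    ∀ (n : ℕ) (σ : Fin n → Bool) (ξ : Fin n → g) (c : ℕ) (v : M),
    (∀ (k : ℕ) (η : Fin k → g), c ≤ k → (∀ i, η i ∈ m) →
      ((List.ofFn fun i => (LieModule.toEnd K g M (η i) - χ (η i) • 1)).prod) v = 0) →
    (∀ i, ξ i ∈ m) → c ≤ ∑ i, (if σ i then 0 else 1 : ℕ) →
    ((List.ofFn fun i => if σ i then (1 : Module.End K M)
      else (LieModule.toEnd K g M (ξ i) - χ (ξ i) • 1)).prod) v = 0 := by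
  intro n
  induction n with
  | zero =>
    intro σ ξ c v hv hξ hc
    simp only [Finset.univ_eq_empty, Finset.sum_empty, Nat.le_zero] at hc
    have := hv 0 (fun i => i.elim0) (by omega) (fun i => i.elim0)
    simpa using this
  | succ n ih =>
    intro σ ξ c v hv hξ hc
    rw [List.ofFn_succ', List.prod_concat, Module.End.mul_apply]
    rw [Fin.sum_univ_castSucc] at hc
    by_cases hb : σ (Fin.last n)
    · simp only [hb, if_true, Module.End.one_apply]
      refine ih (fun i => σ i.castSucc) (fun i => ξ i.castSucc) c v hv
        (fun i => hξ i.castSucc) ?_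
      simp only [hb, if_true] at hc
      show c ≤ ∑ i : Fin n, if σ i.castSucc then 0 else 1
      omega
    · simp only [hb, if_false, Bool.false_eq_true]
      refine ih (fun i => σ i.castSucc) (fun i => ξ i.castSucc) (c - 1)
        ((LieModule.toEnd K g M (ξ (Fin.last n)) - χ (ξ (Fin.last n)) • 1) v) ?_
        (fun i => hξ i.castSucc) ?_
      · intro k η hk hη
        have hv' := hv (k + 1) (Fin.snoc η (ξ (Fin.last n))) (by omega)
          (fun i => by
            refine Fin.lastCases ?_ (fun j => ?_) i
            · simpa using hξ (Fin.last n)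
            · simpa using hη j)
        rw [List.ofFn_succ', List.prod_concat, Module.End.mul_apply] at hv'
        simpa [Fin.snoc_castSucc, Fin.snoc_last] using hv'
      · simp only [hb, if_false, Bool.false_eq_true] at hc
        show c - 1 ≤ ∑ i : Fin n, if σ i.castSucc then 0 else 1
        omega

end Extend

section Expand

variable {L M : Type*} [AddCommGroup L] [Module K L] [AddCommGroup M] [Module K M]

lemma tensor_expand :
    ∀ (n : ℕ) (A : Fin n → Module.End K L) (B : Fin n → Module.End K M) (x : L) (v : M),
    ((List.ofFn fun i => LinearMap.rTensor M (A i) + LinearMap.lTensor L (B i)).prod)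
        (x ⊗ₜ[K] v)
      = ∑ σ : Fin n → Bool,
        (((List.ofFn fun i => if σ i then A i else 1).prod) x) ⊗ₜ[K]
        (((List.ofFn fun i => if σ i then 1 else B i).prod) v) := by
  intro n
  induction n with
  | zero =>
    intro A B x v
    simp [List.ofFn_zero]
  | succ n ih =>
    intro A B x v
    rw [List.ofFn_succ, List.prod_cons, Module.End.mul_apply,
      ih (fun i => A i.succ) (fun i => B i.succ) x v, map_sum]
    rw [← Equiv.sum_comp (Fin.consEquiv fun _ : Fin (n + 1) => Bool)]
    rw [Fintype.sum_prod_type]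
    rw [Fintype.sum_bool]
    rw [← Finset.sum_add_distrib]
    refine Finset.sum_congr rfl fun σ _ => ?_
    simp only [Fin.consEquiv_apply, List.ofFn_succ, List.prod_cons, Fin.cons_zero,
      Fin.cons_succ, if_true, if_false, Module.End.mul_apply, Module.End.one_apply,
      LinearMap.add_apply, LinearMap.rTensor_tmul, LinearMap.lTensor_tmul]
    rfl

end Expand

section Filtration

variable {L : Type*} [AddCommGroup L] [Module K L]

def S0 (H : Module.End K L) : Set K := {μ | H.maxGenEigenspace μ ≠ ⊥}

def aboveSet (H : Module.End K L) (μ : K) : Set K :=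
  {ν | ν ∈ S0 H ∧ ∃ k : ℕ, ν = μ + (k : K)}

noncomputable def filt (H : Module.End K L) (j : ℤ) : Submodule K L :=
  ⨆ p : {μ : K // μ ∈ S0 H ∧ (((S0 H).ncard - (aboveSet H μ).ncard : ℕ) : ℤ) ≤ j},
    H.maxGenEigenspace p.1

variable (H : Module.End K L)

lemma S0_finite [FiniteDimensional K L] : (S0 H).Finite :=
  WellFoundedGT.finite_ne_bot_of_iSupIndep H.independent_maxGenEigenspace

lemma above_finite [FiniteDimensional K L] (μ : K) : (aboveSet H μ).Finite :=
  (S0_finite H).subset fun _ hν => hν.1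

lemma above_card_le [FiniteDimensional K L] (μ : K) :
    (aboveSet H μ).ncard ≤ (S0 H).ncard :=
  Set.ncard_le_ncard (fun _ hν => hν.1) (S0_finite H)

lemma above_card_pos [FiniteDimensional K L] {μ : K} (hμ : μ ∈ S0 H) :
    1 ≤ (aboveSet H μ).ncard :=
  (Set.ncard_pos (above_finite H μ)).mpr ⟨μ, hμ, 0, by simp⟩

lemma above_card_lt [FiniteDimensional K L] [CharZero K] {μ : K} (hμ : μ ∈ S0 H)
    {i : ℤ} (hi : i ≤ -1) (hν : ((i : K) + μ) ∈ S0 H) :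
    (aboveSet H μ).ncard + 1 ≤ (aboveSet H ((i : K) + μ)).ncard := by
  have h1 : ((-i).toNat : ℤ) = -i := Int.toNat_of_nonneg (by omega)
  have h2 : (((-i).toNat : ℕ) : K) = -(i : K) := by
    rw [← Int.cast_natCast, h1, Int.cast_neg]
  have hsub : insert ((i : K) + μ) (aboveSet H μ) ⊆ aboveSet H ((i : K) + μ) := by
    rintro ν (rfl | ⟨hνS, k, rfl⟩)
    · exact ⟨hν, 0, by simp⟩
    · refine ⟨hνS, k + (-i).toNat, ?_⟩
      push_cast [h2]
      ring
  have hnot : ((i : K) + μ) ∉ aboveSet H μ := by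
    rintro ⟨-, k, hk⟩
    have : (i : K) = (k : K) := by linear_combination hk
    have : ((i : ℤ) : K) = ((k : ℤ) : K) := by push_cast; exact this
    have := Int.cast_injective this
    omega
  calc (aboveSet H μ).ncard + 1
      = (insert ((i : K) + μ) (aboveSet H μ)).ncard :=
        (Set.ncard_insert_of_notMem hnot (above_finite H μ)).symm
    _ ≤ (aboveSet H ((i : K) + μ)).ncard := Set.ncard_le_ncard hsub (above_finite H _)

lemma filt_mono {j j' : ℤ} (hj : j ≤ j') : filt H j ≤ filt H j' :=
  iSup_le fun p => le_iSup_of_le ⟨p.1, p.2.1, p.2.2.trans hj⟩ le_rfl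

lemma filt_neg {j : ℤ} (hj : j < 0) : filt H j = ⊥ :=
  le_bot_iff.mp (iSup_le fun p => absurd p.2.2 (by omega))

lemma filt_top [FiniteDimensional K L] [IsAlgClosed K] :
    filt H ((S0 H).ncard : ℤ) = ⊤ := by
  rw [eq_top_iff, ← Module.End.iSup_maxGenEigenspace_eq_top H]
  refine iSup_le fun μ => ?_
  by_cases hμ : μ ∈ S0 H
  · exact le_iSup_of_le ⟨μ, hμ, by
      have := above_card_le H μ
      omega⟩ le_rfl
  · have hb : H.maxGenEigenspace μ = ⊥ := not_not.mp hμ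
    rw [hb]; exact bot_le

lemma filt_shift [CharZero K] [FiniteDimensional K L]
    [LieRingModule g L] [LieModule K g L]
    (h ξ : g) (i : ℤ) (hi : i ≤ -1)
    (hξ : ξ ∈ Module.End.eigenspace (LieAlgebra.ad K g h) (i : K)) (j : ℤ) (x : L)
    (hx : x ∈ filt (LieModule.toEnd K g L h) j) :
    ⁅ξ, x⁆ ∈ filt (LieModule.toEnd K g L h) (j - 1) := by
  set H := LieModule.toEnd K g L h with hH
  have hξ' : ξ ∈ (LieModule.toEnd K g g h).maxGenEigenspace (i : K) :=
    (Module.End.genEigenspace _ _).monotone le_top hξ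
  refine Submodule.iSup_induction (motive := fun y => ⁅ξ, y⁆ ∈ filt H (j - 1)) _ hx
    (fun p y hy => ?_) (by show ⁅ξ, (0:L)⁆ ∈ _; rw [lie_zero]; exact zero_mem _)
    (fun y z hy hz => by
      show ⁅ξ, y + z⁆ ∈ _
      rw [lie_add]; exact add_mem hy hz)
  show ⁅ξ, y⁆ ∈ filt H (j - 1)
  obtain ⟨μ, hμS, hμj⟩ := p
  have hmem : ⁅ξ, y⁆ ∈ H.maxGenEigenspace ((i : K) + μ) :=
    LieModule.lie_mem_maxGenEigenspace_toEnd hξ' hy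
  by_cases hb : H.maxGenEigenspace ((i : K) + μ) = ⊥
  · rw [hb, Submodule.mem_bot] at hmem
    rw [hmem]; exact zero_mem _
  · have hνS : ((i : K) + μ) ∈ S0 H := hb
    have h1 := above_card_lt H hμS hi hνS
    have h2 := above_card_le H ((i : K) + μ)
    exact Submodule.mem_iSup_of_mem ⟨(i : K) + μ, hνS, by omega⟩ hmem

end Filtration

/-- The key fact on the finite-dimensional side: products with at least `r` genuine
factors from `m` (the rest being identities) vanish on `L`. -/
lemma lside_nilpotent [IsAlgClosed K] [CharZero K]
    (h : g) (m : Submodule K g)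
    (hml : m ≤ ⨆ i : ℤ, ⨆ _ : i ≤ -1,
      Module.End.eigenspace (LieAlgebra.ad K g h) ((i : ℤ) : K))
    (L : Type*) [AddCommGroup L] [Module K L] [LieRingModule g L] [LieModule K g L]
    [FiniteDimensional K L] :
    ∃ r : ℕ, ∀ (n : ℕ) (σ : Fin n → Bool) (ξ : Fin n → g), (∀ i, ξ i ∈ m) →
      r ≤ ∑ i, (if σ i then 1 else 0 : ℕ) →
      ((List.ofFn fun i => if σ i then LieModule.toEnd K g L (ξ i) else 1).prod) = 0 := by
  set H := LieModule.toEnd K g L h with hH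
  -- every element of `m` lowers the filtration
  have hstep : ∀ ξ ∈ m, ∀ (j : ℤ) (x : L), x ∈ filt H j → ⁅ξ, x⁆ ∈ filt H (j - 1) := by
    have : m ≤ {
        carrier := {ξ : g | ∀ (j : ℤ) (x : L), x ∈ filt H j → ⁅ξ, x⁆ ∈ filt H (j - 1)}
        add_mem' := by
          intro a b ha hb j x hx
          rw [add_lie]; exact add_mem (ha j x hx) (hb j x hx)
        zero_mem' := by intro j x hx; rw [zero_lie]; exact zero_mem _
        smul_mem' := by
          intro c a ha j x hx
          rw [smul_lie]; exact Submodule.smul_mem _ c (ha j x hx) } := by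
      refine hml.trans ?_
      refine iSup_le fun i => iSup_le fun hi => ?_
      intro ξ hξ
      exact fun j x hx => filt_shift h ξ i hi hξ j x hx
    exact fun ξ hξ => this hξ
  -- products lower the filtration by the number of genuine factors
  have hchain : ∀ (n : ℕ) (σ : Fin n → Bool) (ξ : Fin n → g), (∀ i, ξ i ∈ m) →
      ∀ (j : ℤ) (x : L), x ∈ filt H j →
      ((List.ofFn fun i => if σ i then LieModule.toEnd K g L (ξ i) else 1).prod) x
        ∈ filt H (j - (↑(∑ i, if σ i then (1:ℕ) else 0) : ℤ)) := by
    intro n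
    induction n with
    | zero => intro σ ξ _ j x hx; simpa using hx
    | succ n ih =>
      intro σ ξ hξ j x hx
      rw [List.ofFn_succ, List.prod_cons, Module.End.mul_apply]
      have hx' := ih (fun i => σ i.succ) (fun i => ξ i.succ) (fun i => hξ i.succ) j x hx
      rw [Fin.sum_univ_succ]
      by_cases hb : σ 0
      · simp only [hb, if_true]
        have := hstep (ξ 0) (hξ 0) _ _ hx'
        rw [LieModule.toEnd_apply_apply]
        convert this using 2
        push_cast
        ring
      · simp only [hb, if_false, Bool.false_eq_true, Module.End.one_apply]
        convert hx' using 2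
        push_cast
        ring
  refine ⟨(S0 H).ncard + 1, fun n σ ξ hξ hr => ?_⟩
  ext x
  have hx : x ∈ filt H ((S0 H).ncard : ℤ) := by rw [filt_top]; exact Submodule.mem_top
  have := hchain n σ ξ hξ _ x hx
  rw [filt_neg H (by omega), Submodule.mem_bot] at this
  simpa using this

end WhittakerAux17


/-- A `g`-module `M` is Whittaker (for the nilpotent `e` and the subalgebra `m`) if
`m_χ` acts locally nilpotently on `M`: for every `v ∈ M` there exists `n ∈ ℕ` such that
`(ξ₁ − χ(ξ₁))⋯(ξₙ − χ(ξₙ))·v = 0` for all `ξ₁, …, ξₙ ∈ m`, where `χ = κ(e, ·)`. -/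
noncomputable def IsWhittakerModule
    (K : Type*) [Field K]
    (g : Type*) [LieRing g] [LieAlgebra K g] [Module.Finite K g]
    (e : g) (m : Submodule K g)
    (M : Type*) [AddCommGroup M] [Module K M] [LieRingModule g M] [LieModule K g M] :
    Prop :=
  ∀ v : M, ∃ n : ℕ, ∀ ξ : Fin n → g, (∀ i, ξ i ∈ m) →
    ((List.ofFn fun i : Fin n =>
      (LieModule.toEnd K g M (ξ i) - killingForm K g e (ξ i) • 1)).prod) v = 0

/-- If `L` is a finite-dimensional `g`-module and `M` is a Whittaker
`g`-module, then the tensor product `L ⊗ M` (with the diagonal `g`-action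
`ξ·(l ⊗ v) = (ξ·l) ⊗ v + l ⊗ (ξ·v)`) is again a Whittaker `g`-module. -/
theorem tensor_with_finite_dimensional_is_whittaker
    (K : Type*) [Field K] [IsAlgClosed K] [CharZero K]
    (g : Type*) [LieRing g] [LieAlgebra K g] [FiniteDimensional K g]
    [LieAlgebra.IsSemisimple K g]
    (e h f : g) (he : e ≠ 0)
    (hhe : ⁅h, e⁆ = (2 : K) • e) (hhf : ⁅h, f⁆ = (-2 : K) • f) (hef : ⁅e, f⁆ = h)
    (l : Submodule K g)
    (hl : l ≤ Module.End.eigenspace (LieAlgebra.ad K g h) ((-1 : ℤ) : K))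
    (hiso : ∀ x ∈ l, ∀ y ∈ l, killingForm K g e ⁅x, y⁆ = 0)
    (hmax : ∀ l' : Submodule K g,
      l' ≤ Module.End.eigenspace (LieAlgebra.ad K g h) ((-1 : ℤ) : K) →
      (∀ x ∈ l', ∀ y ∈ l', killingForm K g e ⁅x, y⁆ = 0) → l ≤ l' → l' = l)
    (m : Submodule K g)
    (hm : m = l ⊔ ⨆ i : ℤ, ⨆ _ : i ≤ -2,
      Module.End.eigenspace (LieAlgebra.ad K g h) (i : K))
    (L : Type*) [AddCommGroup L] [Module K L] [LieRingModule g L] [LieModule K g L]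
    [FiniteDimensional K L]
    (M : Type*) [AddCommGroup M] [Module K M] [LieRingModule g M] [LieModule K g M]
    (hM : IsWhittakerModule K g e m M) :
    IsWhittakerModule K g e m (L ⊗[K] M) := by
  classical
  have hml : m ≤ ⨆ i : ℤ, ⨆ _ : i ≤ -1,
      Module.End.eigenspace (LieAlgebra.ad K g h) ((i : ℤ) : K) := by
    rw [hm]
    refine sup_le ?_ ?_
    · exact le_trans hl (le_iSup_of_le (-1) (le_iSup_of_le (by norm_num) le_rfl))
    · exact iSup_le fun i => iSup_le fun hi =>
        le_iSup_of_le i (le_iSup_of_le (by omega) le_rfl)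
  obtain ⟨r, hr⟩ := WhittakerAux17.lside_nilpotent h m hml L
  intro t
  induction t using TensorProduct.induction_on with
  | zero => exact ⟨0, fun ξ _ => by simp⟩
  | tmul x v =>
    obtain ⟨nv, hnv⟩ := hM v
    refine ⟨r + nv, fun ξ hξ => ?_⟩
    have hlist : (List.ofFn fun i : Fin (r + nv) =>
        (LieModule.toEnd K g (L ⊗[K] M) (ξ i) - killingForm K g e (ξ i) • 1))
        = List.ofFn fun i : Fin (r + nv) =>
          LinearMap.rTensor M (LieModule.toEnd K g L (ξ i))
          + LinearMap.lTensor L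
              (LieModule.toEnd K g M (ξ i) - killingForm K g e (ξ i) • 1) := by
      refine congrArg _ (funext fun i => ?_)
      refine TensorProduct.ext' fun a b => ?_
      simp only [LinearMap.sub_apply, LinearMap.smul_apply, Module.End.one_apply,
        LinearMap.add_apply, LinearMap.rTensor_tmul, LinearMap.lTensor_tmul,
        LieModule.toEnd_apply_apply, TensorProduct.LieModule.lie_tmul_right,
        TensorProduct.tmul_sub, TensorProduct.tmul_smul]
      abel
    rw [hlist, WhittakerAux17.tensor_expand]
    refine Finset.sum_eq_zero fun σ _ => ?_
    by_cases hσ : r ≤ ∑ i, (if σ i then 1 else 0 : ℕ)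
    · rw [hr _ σ ξ hξ hσ]
      simp
    · have hsum : (∑ i, (if σ i then 1 else 0 : ℕ))
          + (∑ i, (if σ i then 0 else 1 : ℕ)) = r + nv := by
        rw [← Finset.sum_add_distrib]
        have hone : ∀ i : Fin (r + nv),
            ((if σ i then 1 else 0) + (if σ i then 0 else 1) : ℕ) = 1 := fun i => by
          by_cases hb : σ i <;> simp [hb]
        simp [hone]
      have hc : nv ≤ ∑ i, (if σ i then 0 else 1 : ℕ) := by omega
      rw [WhittakerAux17.mixed_kill (killingForm K g e) m _ σ ξ nv v
        (fun k η hk hη =>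
          WhittakerAux17.kill_extend (killingForm K g e) m v nv hnv k hk η hη) hξ hc]
      simp
  | add t1 t2 ih1 ih2 =>
    obtain ⟨n1, h1⟩ := ih1
    obtain ⟨n2, h2⟩ := ih2
    refine ⟨max n1 n2, fun ξ hξ => ?_⟩
    rw [map_add,
      WhittakerAux17.kill_extend (killingForm K g e) m t1 n1 h1 _ (le_max_left _ _) ξ hξ,
      WhittakerAux17.kill_extend (killingForm K g e) m t2 n2 h2 _ (le_max_right _ _) ξ hξ,
      add_zero]
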